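/- Let K be a field, V and W finite-dimensional K-vector spaces, and B : V × W → K a perfect bilinear pairing (the induced linear maps V → W* and W → V* are bijective). Let f : V → V and g : W → W be linear endomorphisms and c ∈ K a nonzero scalar such that B(f v, g w) = c·B(v, w) for all v ∈ V, w ∈ W. Then f and g are bijective, and the characteristic polynomial of g equals the characteristic polynomial of the endomorphism c·f⁻¹ of V. In particular, if α is a root of the characteristic polynomial of f in some extension of K, then c/α is a root of the characteristic polynomial of g. -/

import Mathlib

universe u v w

open Polynomial Matrix

lemma aux_charpoly_transpose {R : Type*} [CommRing R] {n : Type*} [DecidableEq n] [Fintype n]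
    (M : Matrix n n R) : Mᵀ.charpoly = M.charpoly := by
  rw [Matrix.charpoly, Matrix.charpoly, ← Matrix.det_transpose (charmatrix M)]
  congr 1
  ext i j
  rcases eq_or_ne i j with rfl | h
  · simp [charmatrix_apply_eq]
  · simp [charmatrix_apply_ne _ _ _ h, charmatrix_apply_ne _ _ _ (Ne.symm h),
      Matrix.transpose_apply]

lemma aux_eval_charpoly {R : Type*} [CommRing R] {n : Type*} [DecidableEq n] [Fintype n]
    (M : Matrix n n R) (t : R) : M.charpoly.eval t = (t • (1 : Matrix n n R) - M).det := by
  rw [Matrix.charpoly, ← Polynomial.coe_evalRingHom, RingHom.map_det]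
  congr 1
  ext i j
  rcases eq_or_ne i j with rfl | h
  · simp [charmatrix_apply_eq, Matrix.one_apply]
  · simp [charmatrix_apply_ne _ _ _ h, Matrix.one_apply_ne h]

/-- The linear-algebra content of (2.4) in Deligne's Weil I (Poincaré duality and Frobenius
eigenvalues): if `B : V × W → K` is a perfect pairing of finite-dimensional vector spaces
and `f`, `g` are endomorphisms with `B(f v, g w) = c · B(v, w)` for a nonzero scalar `c`,
then `f` and `g` are bijective, the characteristic polynomial of `g` equals that of
`c • f⁻¹`, and in particular if `α` is a root of the characteristic polynomial of `f` in
an extension of `K` then `c/α` is a root of the characteristic polynomial of `g`. -/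
theorem charpoly_of_adjoint_wrt_perfect_pairing
    {K : Type u} {V : Type v} {W : Type w} [Field K]
    [AddCommGroup V] [Module K V] [AddCommGroup W] [Module K W]
    [FiniteDimensional K V] [FiniteDimensional K W]
    (B : V →ₗ[K] W →ₗ[K] K)
    (hB₁ : Function.Bijective B) (hB₂ : Function.Bijective B.flip)
    (f : Module.End K V) (g : Module.End K W) (c : K) (hc : c ≠ 0)
    (hfg : ∀ (v : V) (w : W), B (f v) (g w) = c * B v w) :
    Function.Bijective f ∧ Function.Bijective g ∧
    ∃ f' : Module.End K V, f' * f = 1 ∧ f * f' = 1 ∧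
      g.charpoly = (c • f').charpoly ∧
      ∀ (L : Type u) [Field L] [Algebra K L] (α : L),
        (f.charpoly.map (algebraMap K L)).IsRoot α →
        (g.charpoly.map (algebraMap K L)).IsRoot (algebraMap K L c / α) := by
  -- f and g are injective, hence bijective
  have hfinj : Function.Injective f := by
    rw [injective_iff_map_eq_zero]
    intro v hv
    apply hB₁.injective
    rw [map_zero]
    ext w
    have h := (hfg v w).symm
    rw [hv, map_zero, LinearMap.zero_apply] at h
    simpa [hc] using mul_eq_zero.mp h
  have hf : Function.Bijective f :=
    ⟨hfinj, (LinearMap.injective_iff_surjective).mp hfinj⟩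
  have hginj : Function.Injective g := by
    rw [injective_iff_map_eq_zero]
    intro w hw
    apply hB₂.injective
    rw [map_zero]
    ext v
    have h := (hfg v w).symm
    rw [hw, map_zero] at h
    simpa [hc] using mul_eq_zero.mp h
  have hg : Function.Bijective g :=
    ⟨hginj, (LinearMap.injective_iff_surjective).mp hginj⟩
  refine ⟨hf, hg, ?_⟩
  set F : V ≃ₗ[K] V := LinearEquiv.ofBijective f hf with hF
  set f' : Module.End K V := F.symm.toLinearMap with hf'def
  have hf'f : f' * f = 1 := LinearMap.ext fun v => F.symm_apply_apply v
  have hff' : f * f' = 1 := LinearMap.ext fun v => F.apply_symm_apply v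
  -- the adjoint relation: g is the B-adjoint of c • f'
  have hadj : ∀ (u : V) (w : W), B u (g w) = B ((c • f') u) w := by
    intro u w
    have h := hfg (f' u) w
    have hu : f (f' u) = u := F.apply_symm_apply u
    rw [hu] at h
    rw [h]
    simp [smul_eq_mul, mul_comm]
  -- choose a basis of V and the dual basis of W
  set b : Module.Basis (Fin (Module.finrank K V)) K V := Module.finBasis K V with hb
  set e : W ≃ₗ[K] Module.Dual K V := LinearEquiv.ofBijective B.flip hB₂ with he
  set b' : Module.Basis (Fin (Module.finrank K V)) K W := b.dualBasis.map e.symm with hb'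
  have heb' : ∀ j, e (b' j) = b.dualBasis j := by
    intro j
    rw [hb', Module.Basis.map_apply, LinearEquiv.apply_symm_apply]
  have hcoordV : ∀ (v : V) (j), B v (b' j) = b.repr v j := by
    intro v j
    have : B v (b' j) = (B.flip (b' j)) v := rfl
    rw [this]
    have : B.flip (b' j) = e (b' j) := rfl
    rw [this, heb' j, Module.Basis.dualBasis_apply]
  have hcoordW : ∀ (w : W) (i), B (b i) w = b'.repr w i := by
    intro w i
    conv_lhs => rw [← b'.sum_repr w]
    rw [map_sum]
    simp only [_root_.map_smul, smul_eq_mul, hcoordV, Module.Basis.repr_self, Finsupp.single_apply]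
    simp
  -- the matrix of g in b' is the transpose of the matrix of c • f' in b
  have hmat : LinearMap.toMatrix b' b' g = (LinearMap.toMatrix b b (c • f'))ᵀ := by
    ext i j
    rw [LinearMap.toMatrix_apply, Matrix.transpose_apply, LinearMap.toMatrix_apply,
      ← hcoordW, hadj, hcoordV]
  have hcharg : g.charpoly = (c • f').charpoly := by
    rw [← LinearMap.charpoly_toMatrix g b', ← LinearMap.charpoly_toMatrix (c • f') b, hmat,
      aux_charpoly_transpose]
  refine ⟨f', hf'f, hff', hcharg, ?_⟩
  intro L _ _ α hα
  set φ := algebraMap K L with hφ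
  set n := Module.finrank K V with hn
  set M : Matrix (Fin n) (Fin n) K := LinearMap.toMatrix b b f with hM
  set P : Matrix (Fin n) (Fin n) K := LinearMap.toMatrix b b f' with hP
  have hPM : P * M = 1 := by
    rw [hP, hM, ← LinearMap.toMatrix_mul, hf'f, LinearMap.toMatrix_one]
  have hMP : M * P = 1 := by
    rw [hP, hM, ← LinearMap.toMatrix_mul, hff', LinearMap.toMatrix_one]
  set N : Matrix (Fin n) (Fin n) L := M.map φ with hN
  set Pl : Matrix (Fin n) (Fin n) L := P.map φ with hPl
  have hNPl : N * Pl = 1 := by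
    rw [hN, hPl, ← Matrix.map_mul, hMP, Matrix.map_one φ (map_zero φ) (map_one φ)]
  -- the root hypothesis in matrix form
  have hα' : (α • (1 : Matrix (Fin n) (Fin n) L) - N).det = 0 := by
    have : f.charpoly = M.charpoly := (LinearMap.charpoly_toMatrix f b).symm
    rw [this, ← Matrix.charpoly_map] at hα
    rw [← aux_eval_charpoly]
    exact hα
  -- α ≠ 0 because N is invertible
  have hdetN : N.det ≠ 0 := by
    intro h0
    have h1 : N.det * Pl.det = 1 := by rw [← Matrix.det_mul, hNPl, Matrix.det_one]
    rw [h0, zero_mul] at h1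
    exact zero_ne_one h1
  have hαne : α ≠ 0 := by
    rintro rfl
    apply hdetN
    have := hα'
    rwa [zero_smul, zero_sub, Matrix.det_neg, mul_eq_zero, or_iff_right (by
      exact pow_ne_zero _ (neg_ne_zero.mpr one_ne_zero))] at this
  -- reduce the goal to a matrix determinant computation
  have hgoal : g.charpoly.map φ = ((φ c) • Pl).charpoly := by
    have h1 : (c • f').charpoly = (c • P).charpoly := by
      have : LinearMap.toMatrix b b (c • f') = c • P :=
        _root_.map_smul (LinearMap.toMatrix b b) c f'
      rw [← LinearMap.charpoly_toMatrix (c • f') b, this]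
    have h2 : (c • P).map φ = (φ c) • Pl := by
      ext i j
      simp [hPl, Matrix.map_apply, mul_comm]
    rw [hcharg, h1, ← Matrix.charpoly_map, h2]
  rw [Polynomial.IsRoot, hgoal, aux_eval_charpoly]
  set β := φ c / α with hβ
  have hβα : β * α = φ c := div_mul_cancel₀ _ hαne
  have key : β • (1 : Matrix (Fin n) (Fin n) L) - (φ c) • Pl = (β • (N - α • 1)) * Pl := by
    rw [Matrix.smul_mul, sub_mul, hNPl, Matrix.smul_mul, Matrix.one_mul, smul_sub,
      smul_smul, hβα]
  rw [key, Matrix.det_mul, Matrix.det_smul]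
  have : (N - α • 1).det = 0 := by
    have h := hα'
    have h2 : N - α • (1 : Matrix (Fin n) (Fin n) L) = -(α • 1 - N) := (neg_sub _ _).symm
    rw [h2, Matrix.det_neg, h, mul_zero]
  rw [this, mul_zero, zero_mul]
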